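/- Let θ > 0, λ ∈ ℝ, α < β, and let b, σ, h : ℝ → ℝ be continuous with σ(x)² > 0 for all x, and let k₊, k₋ : ℝ → ℝ be C¹. Define H₋(x,θ) = (1/2)θσ(x)²k₊(x)² − (1/2)σ(x)²k₊'(x) − b(x)k₊(x) + h(x) and H₊(x,θ) = (1/2)θσ(x)²k₋(x)² + (1/2)σ(x)²k₋'(x) + b(x)k₋(x) + h(x). Suppose w : ℝ → ℝ is twice continuously differentiable on (α,β) and satisfies (1/2)σ(x)²w''(x) + (1/2)θ(σ(x)w'(x))² + b(x)w'(x) + h(x) − λ = 0 for all x ∈ (α,β). Then: (i) if w'(x) → −k₊(α) as x ↓ α, then w''(x) has a limit as x ↓ α, and this limit equals −k₊'(α) if and only if λ = H₋(α,θ); (ii) if w'(x) → k₋(β) as x ↑ β, then w''(x) has a limit as x ↑ β, and this limit equals k₋'(β) if and only if λ = H₊(β,θ). -/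

import Mathlib

open Set Filter Topology

/-- the smooth-fit characterisation: the `C²` pasting conditions at
the free boundaries `α` and `β` can be satisfied if and only if
`H₋(α,θ) = λ = H₊(β,θ)`. -/
theorem smooth_fit_characterisation
    (θ lam α β : ℝ) (hθ : 0 < θ) (hαβ : α < β)
    (b σ h kp km : ℝ → ℝ)
    (hbc : Continuous b) (hσc : Continuous σ) (hhc : Continuous h)
    (hσpos : ∀ x : ℝ, 0 < (σ x) ^ 2)
    (hkp : ContDiff ℝ 1 kp) (hkm : ContDiff ℝ 1 km)
    (Hm Hp : ℝ → ℝ)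
    (hHm : ∀ x, Hm x = (1 / 2) * θ * (σ x) ^ 2 * (kp x) ^ 2
      - (1 / 2) * (σ x) ^ 2 * deriv kp x - b x * kp x + h x)
    (hHp : ∀ x, Hp x = (1 / 2) * θ * (σ x) ^ 2 * (km x) ^ 2
      + (1 / 2) * (σ x) ^ 2 * deriv km x + b x * km x + h x)
    (w : ℝ → ℝ)
    (hw1 : ∀ x ∈ Ioo α β, DifferentiableAt ℝ w x)
    (hw2 : ∀ x ∈ Ioo α β, DifferentiableAt ℝ (deriv w) x)
    (hw2c : ContinuousOn (deriv (deriv w)) (Ioo α β))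
    (hODE : ∀ x ∈ Ioo α β,
      (1 / 2) * (σ x) ^ 2 * deriv (deriv w) x
        + (1 / 2) * θ * (σ x * deriv w x) ^ 2
        + b x * deriv w x + h x - lam = 0) :
    (Tendsto (deriv w) (𝓝[>] α) (𝓝 (-kp α)) →
      ∃ L : ℝ, Tendsto (deriv (deriv w)) (𝓝[>] α) (𝓝 L) ∧
        (L = -deriv kp α ↔ lam = Hm α)) ∧
    (Tendsto (deriv w) (𝓝[<] β) (𝓝 (km β)) →
      ∃ L : ℝ, Tendsto (deriv (deriv w)) (𝓝[<] β) (𝓝 L) ∧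
        (L = deriv km β ↔ lam = Hp β)) := by
  have hσne : ∀ x : ℝ, (σ x) ^ 2 ≠ 0 := fun x => (hσpos x).ne'
  have key : ∀ x ∈ Ioo α β, deriv (deriv w) x =
      (lam - h x - b x * deriv w x - (1 / 2) * θ * (σ x * deriv w x) ^ 2)
        * (2 / (σ x) ^ 2) := by
    intro x hx
    have h1 := hODE x hx
    have h2 := hσne x
    field_simp
    rw [eq_div_iff h2]
    linarith
  constructor
  · intro hT
    refine ⟨(lam - h α - b α * (-kp α) - (1 / 2) * θ * (σ α * (-kp α)) ^ 2)
        * (2 / (σ α) ^ 2), ?_, ?_⟩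
    · have hmem : Ioo α β ∈ 𝓝[>] α :=
        Ioo_mem_nhdsGT_of_mem (left_mem_Ico.2 hαβ)
      have heq : deriv (deriv w) =ᶠ[𝓝[>] α]
          fun x => (lam - h x - b x * deriv w x
            - (1 / 2) * θ * (σ x * deriv w x) ^ 2) * (2 / (σ x) ^ 2) := by
        filter_upwards [hmem] with x hx using key x hx
      rw [tendsto_congr' heq]
      have hb : Tendsto b (𝓝[>] α) (𝓝 (b α)) :=
        (hbc.tendsto α).mono_left nhdsWithin_le_nhds
      have hh : Tendsto h (𝓝[>] α) (𝓝 (h α)) :=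
        (hhc.tendsto α).mono_left nhdsWithin_le_nhds
      have hσ : Tendsto σ (𝓝[>] α) (𝓝 (σ α)) :=
        (hσc.tendsto α).mono_left nhdsWithin_le_nhds
      exact ((((tendsto_const_nhds.sub hh).sub (hb.mul hT)).sub
        ((tendsto_const_nhds.mul ((hσ.mul hT).pow 2)))).mul
        (tendsto_const_nhds.div (hσ.pow 2) (hσne α)))
    · rw [hHm α, ← mul_div_assoc, div_eq_iff (hσne α)]
      constructor <;> intro h' <;> linarith [h']
  · intro hT
    refine ⟨(lam - h β - b β * (km β) - (1 / 2) * θ * (σ β * (km β)) ^ 2)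
        * (2 / (σ β) ^ 2), ?_, ?_⟩
    · have hmem : Ioo α β ∈ 𝓝[<] β :=
        Ioo_mem_nhdsLT_of_mem (right_mem_Ioc.2 hαβ)
      have heq : deriv (deriv w) =ᶠ[𝓝[<] β]
          fun x => (lam - h x - b x * deriv w x
            - (1 / 2) * θ * (σ x * deriv w x) ^ 2) * (2 / (σ x) ^ 2) := by
        filter_upwards [hmem] with x hx using key x hx
      rw [tendsto_congr' heq]
      have hb : Tendsto b (𝓝[<] β) (𝓝 (b β)) :=
        (hbc.tendsto β).mono_left nhdsWithin_le_nhds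
      have hh : Tendsto h (𝓝[<] β) (𝓝 (h β)) :=
        (hhc.tendsto β).mono_left nhdsWithin_le_nhds
      have hσ : Tendsto σ (𝓝[<] β) (𝓝 (σ β)) :=
        (hσc.tendsto β).mono_left nhdsWithin_le_nhds
      exact ((((tendsto_const_nhds.sub hh).sub (hb.mul hT)).sub
        ((tendsto_const_nhds.mul ((hσ.mul hT).pow 2)))).mul
        (tendsto_const_nhds.div (hσ.pow 2) (hσne β)))
    · rw [hHp β, ← mul_div_assoc, div_eq_iff (hσne β)]
      constructor <;> intro h' <;> linarith [h']
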